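/- arXiv:2406.00647 — 3 statements merged into one kernel-verified Lean document; each statement's English description precedes it below -/
import Mathlib

section
/- Suppose there exists α ∈ (0,∞) such that for all β < γ, n(r_n(γ)^d − r_n(β)^d) → α(γ − β) as n → ∞, and suppose (X_n) is a family of nonnegative random variables with P[X_n ≤ r_n(β)] → exp(−e^{−β}) for every β ∈ ℝ. Then n X_n^d − n μ(X_n)^d converges in distribution to α(Gu + log log 2), where μ(X_n) is a median of X_n and Gu is a standard Gumbel random variable. -/
open MeasureTheory Filter
open scoped ENNReal ProbabilityTheory

/-- If `n (r_n(γ)^d − r_n(β)^d) → α(γ−β)` for all `β < γ` and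
`P[X_n ≤ r_n(β)] → exp(−e^{−β})` for all `β`, then `n X_n^d − n μ(X_n)^d` converges in
distribution to `α(Gu + log log 2)`, i.e. its cdf converges pointwise to
`x ↦ exp(−e^{−(β₀ + x/α)})` with `β₀ = −log log 2`. -/
theorem stmt5 {Ω : Type*} [MeasureSpace Ω] [IsProbabilityMeasure (ℙ : Measure Ω)]
    (d : ℕ) (hd : 1 ≤ d) (α : ℝ) (hα : 0 < α)
    (r : ℕ → ℝ → ℝ) (hrpos : ∀ n β, 0 < r n β) (hrmono : ∀ n, StrictMono (r n))
    (X : ℕ → Ω → ℝ) (hXpos : ∀ n ω, 0 ≤ X n ω)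
    (hdiff : ∀ β γ : ℝ, β < γ →
      Tendsto (fun n : ℕ => (n : ℝ) * (r n γ ^ d - r n β ^ d)) atTop
        (nhds (α * (γ - β))))
    (hcdf : ∀ β : ℝ,
      Tendsto (fun n : ℕ => (ℙ {ω | X n ω ≤ r n β}).toReal) atTop
        (nhds (Real.exp (-Real.exp (-β))))) :
    ∀ x : ℝ,
      Tendsto (fun n : ℕ =>
          (ℙ {ω | (n : ℝ) * X n ω ^ d
              - (n : ℝ) * (sInf {t : ℝ | (1 : ℝ≥0∞) / 2 ≤ ℙ {ω' | X n ω' ≤ t}}) ^ d ≤ x}).toReal)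
        atTop
        (nhds (Real.exp (-Real.exp (-(-Real.log (Real.log 2) + x / α))))) := by
  intro x
  set β₀ : ℝ := -Real.log (Real.log 2) with hβ₀
  set m : ℕ → ℝ := fun n => sInf {t : ℝ | (1 : ℝ≥0∞) / 2 ≤ ℙ {ω' | X n ω' ≤ t}} with hm
  have hd0 : d ≠ 0 := Nat.one_le_iff_ne_zero.mp hd
  have hlog2 : 0 < Real.log 2 := Real.log_pos one_lt_two
  have hGhalf : Real.exp (-Real.exp (-β₀)) = 1 / 2 := by
    rw [hβ₀, neg_neg, Real.exp_log hlog2, Real.exp_neg, Real.exp_log two_pos]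
    norm_num
  have hGmono : StrictMono (fun β : ℝ => Real.exp (-Real.exp (-β))) := by
    intro a b hab
    exact Real.exp_lt_exp.2 (neg_lt_neg (Real.exp_lt_exp.2 (neg_lt_neg hab)))
  have hGcont : Continuous (fun β : ℝ => Real.exp (-Real.exp (-β))) := by continuity
  have hhalf : ((1 : ℝ≥0∞) / 2) = ENNReal.ofReal (1 / 2) := by
    rw [ENNReal.ofReal_div_of_pos (by norm_num)]; norm_num
  have hmono : ∀ n, ∀ s t : ℝ, s ≤ t → ℙ {ω | X n ω ≤ s} ≤ ℙ {ω | X n ω ≤ t} :=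
    fun n s t h => measure_mono (fun ω hω => le_trans hω h)
  have hbdd : ∀ n, BddBelow {t : ℝ | (1 : ℝ≥0∞) / 2 ≤ ℙ {ω' | X n ω' ≤ t}} := by
    intro n
    refine ⟨0, fun t ht => ?_⟩
    by_contra h
    push_neg at h
    have hemp : {ω' | X n ω' ≤ t} = ∅ := by
      ext ω
      simp only [Set.mem_setOf_eq, Set.mem_empty_iff_false, iff_false, not_le]
      exact lt_of_lt_of_le h (hXpos n ω)
    have ht' : (1 : ℝ≥0∞) / 2 ≤ ℙ {ω' | X n ω' ≤ t} := ht
    rw [hemp] at ht'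
    simp at ht'
  have hmem : ∀ γ : ℝ, β₀ < γ → ∀ᶠ n in atTop,
      (1 : ℝ≥0∞) / 2 ≤ ℙ {ω' | X n ω' ≤ r n γ} := by
    intro γ hγ
    have hG : 1 / 2 < Real.exp (-Real.exp (-γ)) := hGhalf ▸ hGmono hγ
    filter_upwards [(hcdf γ).eventually (eventually_gt_nhds hG)] with n hn
    rw [hhalf]
    exact ENNReal.ofReal_le_of_le_toReal hn.le
  have hub : ∀ γ : ℝ, β₀ < γ → ∀ᶠ n in atTop, m n ≤ r n γ := by
    intro γ hγ
    filter_upwards [hmem γ hγ] with n hn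
    exact csInf_le (hbdd n) hn
  have hlb : ∀ β : ℝ, β < β₀ → ∀ᶠ n in atTop, r n β ≤ m n := by
    intro β hβ
    have hG : Real.exp (-Real.exp (-β)) < 1 / 2 := hGhalf ▸ hGmono hβ
    filter_upwards [(hcdf β).eventually (eventually_lt_nhds hG),
      hmem (β₀ + 1) (lt_add_one _)] with n hn hne
    refine le_csInf ⟨_, hne⟩ fun t ht => ?_
    by_contra h
    push_neg at h
    have h1 : ℙ {ω' | X n ω' ≤ t} ≤ ℙ {ω' | X n ω' ≤ r n β} := hmono n _ _ h.le
    have h2 : (1 / 2 : ℝ) ≤ (ℙ {ω' | X n ω' ≤ r n β}).toReal := by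
      have h3 := ENNReal.toReal_mono (measure_ne_top ℙ _) (le_trans ht h1)
      simpa using h3
    linarith
  -- the centered median sequence tends to 0
  have ha : Tendsto (fun n : ℕ => (n : ℝ) * m n ^ d - (n : ℝ) * r n β₀ ^ d) atTop (nhds 0) := by
    rw [Metric.tendsto_atTop]
    intro ε hε
    set δ : ℝ := ε / (2 * α) with hδdef
    have hδ : 0 < δ := by positivity
    have hαδ : α * δ = ε / 2 := by rw [hδdef]; field_simp
    have h1 : Tendsto (fun n : ℕ => (n : ℝ) * (r n (β₀ + δ) ^ d - r n β₀ ^ d)) atTop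
        (nhds (ε / 2)) := by
      have := hdiff β₀ (β₀ + δ) (lt_add_of_pos_right β₀ hδ)
      rwa [add_sub_cancel_left, hαδ] at this
    have h2 : Tendsto (fun n : ℕ => (n : ℝ) * (r n β₀ ^ d - r n (β₀ - δ) ^ d)) atTop
        (nhds (ε / 2)) := by
      have := hdiff (β₀ - δ) β₀ (sub_lt_self β₀ hδ)
      rwa [sub_sub_cancel, hαδ] at this
    have hε2 : ε / 2 < ε := by linarith
    obtain ⟨N, hN⟩ := eventually_atTop.1
      ((h1.eventually (eventually_lt_nhds hε2)).and
        ((h2.eventually (eventually_lt_nhds hε2)).and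
          ((hlb (β₀ - δ) (sub_lt_self β₀ hδ)).and (hub (β₀ + δ) (lt_add_of_pos_right β₀ hδ)))))
    refine ⟨N, fun n hn => ?_⟩
    obtain ⟨c1, c2, c3, c4⟩ := hN n hn
    have hr1 : 0 < r n (β₀ - δ) := hrpos n _
    have hm0 : 0 ≤ m n := le_trans hr1.le c3
    have p1 : m n ^ d ≤ r n (β₀ + δ) ^ d := pow_le_pow_left₀ hm0 c4 d
    have p2 : r n (β₀ - δ) ^ d ≤ m n ^ d := pow_le_pow_left₀ hr1.le c3 d
    have hn0 : (0 : ℝ) ≤ (n : ℝ) := Nat.cast_nonneg n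
    have q1 : (n : ℝ) * m n ^ d ≤ (n : ℝ) * r n (β₀ + δ) ^ d :=
      mul_le_mul_of_nonneg_left p1 hn0
    have q2 : (n : ℝ) * r n (β₀ - δ) ^ d ≤ (n : ℝ) * m n ^ d :=
      mul_le_mul_of_nonneg_left p2 hn0
    rw [mul_sub] at c1 c2
    rw [Real.dist_eq, sub_zero, abs_lt]
    constructor <;> linarith
  have hkey : ∀ γ : ℝ, Tendsto (fun n : ℕ => (n : ℝ) * r n γ ^ d - (n : ℝ) * m n ^ d) atTop
      (nhds (α * (γ - β₀))) := by
    intro γ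
    have hdiff' : Tendsto (fun n : ℕ => (n : ℝ) * (r n γ ^ d - r n β₀ ^ d)) atTop
        (nhds (α * (γ - β₀))) := by
      rcases lt_trichotomy γ β₀ with h | h | h
      · have h3 := (hdiff γ β₀ h).neg
        rw [show -(α * (β₀ - γ)) = α * (γ - β₀) by ring] at h3
        exact h3.congr fun n => by ring
      · subst h
        simpa using tendsto_const_nhds.congr fun n : ℕ => by ring_nf
      · exact hdiff β₀ γ h
    have := hdiff'.sub ha
    rw [sub_zero] at this
    exact this.congr fun n => by ring
  -- main argument
  rw [Metric.tendsto_atTop]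
  intro ε hε
  set β' : ℝ := β₀ + x / α with hβ'
  set L : ℝ := Real.exp (-Real.exp (-β')) with hL
  have hcont : ContinuousAt (fun β : ℝ => Real.exp (-Real.exp (-β))) β' :=
    hGcont.continuousAt
  rw [Metric.continuousAt_iff] at hcont
  obtain ⟨δ, hδpos, hδ⟩ := hcont ε hε
  set δ' : ℝ := δ / 2 with hδ'def
  have hδ'pos : 0 < δ' := half_pos hδpos
  have hdist : ∀ s : ℝ, |s| < δ → |Real.exp (-Real.exp (-(β' + s))) - L| < ε := by
    intro s hs
    have := hδ (x := β' + s) (by rw [Real.dist_eq]; simpa using hs)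
    rwa [Real.dist_eq] at this
  have hup : Real.exp (-Real.exp (-(β' + δ'))) < L + ε := by
    have := hdist δ' (by rw [abs_of_pos hδ'pos]; linarith)
    have := abs_lt.1 this
    linarith [this.2]
  have hdn : L - ε < Real.exp (-Real.exp (-(β' - δ'))) := by
    have := hdist (-δ') (by rw [abs_neg, abs_of_pos hδ'pos]; linarith)
    rw [show β' + -δ' = β' - δ' by ring] at this
    have := abs_lt.1 this
    linarith [this.1]
  have hxup : x < α * (β' + δ' - β₀) := by
    rw [hβ']
    have : α * (β₀ + x / α + δ' - β₀) = x + α * δ' := by field_simp; ring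
    rw [this]
    nlinarith
  have hxdn : α * (β' - δ' - β₀) < x := by
    rw [hβ']
    have : α * (β₀ + x / α - δ' - β₀) = x - α * δ' := by field_simp; ring
    rw [this]
    nlinarith
  have hA := (hkey (β' + δ')).eventually (eventually_gt_nhds hxup)
  have hB := (hkey (β' - δ')).eventually (eventually_lt_nhds hxdn)
  have hC := (hcdf (β' + δ')).eventually (eventually_lt_nhds hup)
  have hD := (hcdf (β' - δ')).eventually (eventually_gt_nhds hdn)
  obtain ⟨N, hN⟩ := eventually_atTop.1
    (hA.and (hB.and (hC.and (hD.and (eventually_ge_atTop 1)))))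
  refine ⟨N, fun n hn => ?_⟩
  obtain ⟨c1, c2, c3, c4, hn1⟩ := hN n hn
  have hmn : sInf {t : ℝ | (1 : ℝ≥0∞) / 2 ≤ ℙ {ω' | X n ω' ≤ t}} = m n := by rw [hm]
  rw [hmn]
  have hnpos : (0 : ℝ) < (n : ℝ) := by exact_mod_cast hn1
  have hsub1 : {ω | (n : ℝ) * X n ω ^ d - (n : ℝ) * m n ^ d ≤ x}
      ⊆ {ω | X n ω ≤ r n (β' + δ')} := by
    intro ω hω
    simp only [Set.mem_setOf_eq] at hω ⊢
    have h1 : (n : ℝ) * X n ω ^ d < (n : ℝ) * r n (β' + δ') ^ d := by linarith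
    have h2 : X n ω ^ d ≤ r n (β' + δ') ^ d :=
      (lt_of_mul_lt_mul_left h1 hnpos.le).le
    exact le_of_pow_le_pow_left₀ hd0 (hrpos n _).le h2
  have hsub2 : {ω | X n ω ≤ r n (β' - δ')}
      ⊆ {ω | (n : ℝ) * X n ω ^ d - (n : ℝ) * m n ^ d ≤ x} := by
    intro ω hω
    simp only [Set.mem_setOf_eq] at hω ⊢
    have h2 : X n ω ^ d ≤ r n (β' - δ') ^ d := pow_le_pow_left₀ (hXpos n ω) hω d
    have h3 : (n : ℝ) * X n ω ^ d ≤ (n : ℝ) * r n (β' - δ') ^ d :=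
      mul_le_mul_of_nonneg_left h2 hnpos.le
    linarith
  have hP1 : (ℙ {ω | (n : ℝ) * X n ω ^ d - (n : ℝ) * m n ^ d ≤ x}).toReal
      ≤ (ℙ {ω | X n ω ≤ r n (β' + δ')}).toReal :=
    ENNReal.toReal_mono (measure_ne_top ℙ _) (measure_mono hsub1)
  have hP2 : (ℙ {ω | X n ω ≤ r n (β' - δ')}).toReal
      ≤ (ℙ {ω | (n : ℝ) * X n ω ^ d - (n : ℝ) * m n ^ d ≤ x}).toReal :=
    ENNReal.toReal_mono (measure_ne_top ℙ _) (measure_mono hsub2)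
  rw [Real.dist_eq, abs_lt]
  constructor <;> linarith
end

section
/- Fix k ∈ ℕ and c > 0. For each n ≥ 1 let r be defined by n r^d = c log n, and suppose ν is a probability measure on a compact set A ⊂ ℝ^d satisfying ν(B_r(x)) ≥ 2δ₀ r^d for all x ∈ A and r ∈ (0,1], for some δ₀ with 2δ₀c > 1. Then n ∫_A Σ_{j=0}^{k−1} ((n ν(B_r(x)))^j / j!) exp(−n ν(B_r(x))) ν(dx) → 0 as n → ∞. In particular the expected number of k-isolated points tends to 0 at this radius scale. -/
open MeasureTheory Metric Filter

lemma aux_mono {m : ℕ} {s t : ℝ} (hm : (m : ℝ) ≤ s) (hs : 0 < s) (hst : s ≤ t) :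
    t ^ m * Real.exp (-t) ≤ s ^ m * Real.exp (-s) := by
  have ht : 0 < t := hs.trans_le hst
  have h1 : (t / s) ^ m ≤ Real.exp ((m : ℝ) * (t / s - 1)) := by
    calc (t / s) ^ m ≤ (Real.exp (t / s - 1)) ^ m := by
          apply pow_le_pow_left₀ (by positivity)
          linarith [Real.add_one_le_exp (t / s - 1)]
      _ = Real.exp ((m : ℝ) * (t / s - 1)) := by
          rw [← Real.exp_nat_mul]
  have h2 : (m : ℝ) * (t / s - 1) ≤ t - s := by
    have : (m : ℝ) * (t / s - 1) = (m : ℝ) * (t - s) / s := by field_simp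
    rw [this]
    rw [div_le_iff₀ hs]
    have : (m : ℝ) * (t - s) ≤ s * (t - s) := by nlinarith
    linarith
  have h3 : t ^ m ≤ s ^ m * Real.exp (t - s) := by
    have : t ^ m = s ^ m * (t / s) ^ m := by
      rw [← mul_pow]; rw [mul_div_cancel₀ _ hs.ne']
    rw [this]
    have := h1.trans (Real.exp_le_exp.2 h2)
    exact mul_le_mul_of_nonneg_left this (by positivity)
  calc t ^ m * Real.exp (-t) ≤ s ^ m * Real.exp (t - s) * Real.exp (-t) :=
        mul_le_mul_of_nonneg_right h3 (Real.exp_pos _).le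
    _ = s ^ m * Real.exp (-s) := by rw [mul_assoc, ← Real.exp_add]; ring_nf

lemma aux_sum {k : ℕ} (hk : 1 ≤ k) {s t : ℝ} (hks : (k : ℝ) ≤ s) (hst : s ≤ t) :
    ∑ j ∈ Finset.range k, t ^ j / (Nat.factorial j) * Real.exp (-t)
      ≤ (k : ℝ) * (s ^ (k - 1) * Real.exp (-s)) := by
  have hs : 0 < s := lt_of_lt_of_le (by exact_mod_cast hk) hks
  have ht1 : (1 : ℝ) ≤ t := le_trans (le_trans (by exact_mod_cast hk) hks) hst
  have hbound : ∀ j ∈ Finset.range k,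
      t ^ j / (Nat.factorial j) * Real.exp (-t) ≤ s ^ (k - 1) * Real.exp (-s) := by
    intro j hj
    have hjk : j ≤ k - 1 := Nat.le_sub_one_of_lt (Finset.mem_range.1 hj)
    calc t ^ j / (Nat.factorial j) * Real.exp (-t)
        ≤ t ^ j * Real.exp (-t) := by
          apply mul_le_mul_of_nonneg_right _ (Real.exp_pos _).le
          apply div_le_self (by positivity)
          exact_mod_cast Nat.one_le_iff_ne_zero.2 (Nat.factorial_ne_zero j)
      _ ≤ t ^ (k - 1) * Real.exp (-t) := by
          apply mul_le_mul_of_nonneg_right _ (Real.exp_pos _).le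
          exact pow_le_pow_right₀ ht1 hjk
      _ ≤ s ^ (k - 1) * Real.exp (-s) := by
          apply aux_mono _ hs hst
          calc ((k - 1 : ℕ) : ℝ) ≤ (k : ℝ) := by exact_mod_cast Nat.sub_le k 1
            _ ≤ s := hks
  calc ∑ j ∈ Finset.range k, t ^ j / (Nat.factorial j) * Real.exp (-t)
      ≤ ∑ _j ∈ Finset.range k, s ^ (k - 1) * Real.exp (-s) := Finset.sum_le_sum hbound
    _ = (k : ℝ) * (s ^ (k - 1) * Real.exp (-s)) := by
        rw [Finset.sum_const, Finset.card_range, nsmul_eq_mul]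

/-- If `ν(B_r(x)) ≥ 2δ₀ r^d` on `A` for `r ∈ (0,1]`, with `2δ₀c > 1`, then taking the radius
`r_n = (c log n / n)^{1/d}` (so that `n r_n^d = c log n`), the expected number of `k`-isolated
points, `n ∫_A Σ_{j<k} ((nν(B_{r_n}(x)))^j/j!) e^{−nν(B_{r_n}(x))} ν(dx)`, tends to `0`. -/
theorem stmt9 (d k : ℕ) (hd : 1 ≤ d) (hk : 1 ≤ k) (c δ₀ : ℝ) (hc : 0 < c) (hδ : 0 < δ₀)
    (hδc : 1 < 2 * δ₀ * c)
    (A : Set (EuclideanSpace ℝ (Fin d))) (hA : IsCompact A)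
    (ν : Measure (EuclideanSpace ℝ (Fin d))) [IsProbabilityMeasure ν] (hAν : ν A = 1)
    (hlb : ∀ x ∈ A, ∀ r : ℝ, 0 < r → r ≤ 1 →
      2 * δ₀ * r ^ d ≤ (ν (closedBall x r)).toReal) :
    Tendsto (fun n : ℕ =>
        (n : ℝ) * ∫ x in A, ∑ j ∈ Finset.range k,
          ((n : ℝ) * (ν (closedBall x ((c * Real.log n / n) ^ ((1 : ℝ) / d)))).toReal) ^ j
              / (Nat.factorial j)
            * Real.exp
              (-((n : ℝ) *
                (ν (closedBall x ((c * Real.log n / n) ^ ((1 : ℝ) / d)))).toReal)) ∂ν)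
      atTop (nhds 0) := by
  have hεpos : 0 < 2 * δ₀ * c - 1 := by linarith
  have hsc : 0 < 2 * δ₀ * c := by linarith
  have hL : Tendsto (fun n : ℕ => Real.log n) atTop atTop :=
    Real.tendsto_log_atTop.comp tendsto_natCast_atTop_atTop
  set g : ℕ → ℝ := fun n => (k : ℝ) * (2 * δ₀ * c) ^ (k - 1) *
      ((Real.log n) ^ ((k - 1 : ℕ) : ℝ) * Real.exp (-(2 * δ₀ * c - 1) * Real.log n)) with hg
  apply squeeze_zero_norm' (a := g)
  · -- eventual bound
    have e0 : ∀ᶠ n : ℕ in atTop, 0 < Real.log n := hL.eventually_gt_atTop 0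
    have e1 : ∀ᶠ n : ℕ in atTop, (k : ℝ) / (2 * δ₀ * c) ≤ Real.log n :=
      hL.eventually_ge_atTop _
    have e2 : ∀ᶠ n : ℕ in atTop, ‖Real.log (n : ℝ)‖ ≤ 1 / c * ‖(n : ℝ)‖ :=
      tendsto_natCast_atTop_atTop.eventually
        (Real.isLittleO_log_id_atTop.def (by positivity))
    filter_upwards [e0, e1, e2, eventually_ge_atTop 1] with n h0 h1 h2 hn1
    have hnpos : (0 : ℝ) < n := by exact_mod_cast hn1
    set L := Real.log n with hLdef
    set s := 2 * δ₀ * c * L with hsdef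
    have hbase : 0 < c * L / n := by positivity
    have hbase1 : c * L / n ≤ 1 := by
      rw [div_le_one hnpos]
      rw [Real.norm_of_nonneg h0.le, Real.norm_of_nonneg hnpos.le] at h2
      calc c * L ≤ c * (1 / c * n) := by
            exact mul_le_mul_of_nonneg_left h2 hc.le
        _ = n := by field_simp
    set r := (c * L / n) ^ ((1 : ℝ) / d) with hrdef
    have hr : 0 < r := Real.rpow_pos_of_pos hbase _
    have hr1 : r ≤ 1 := Real.rpow_le_one hbase.le hbase1 (by positivity)
    have hrd : (n : ℝ) * r ^ d = c * L := by
      have hd0 : (d : ℝ) ≠ 0 := by positivity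
      rw [hrdef, ← Real.rpow_natCast ((c * L / n) ^ ((1:ℝ)/d)) d, ← Real.rpow_mul hbase.le]
      rw [one_div, inv_mul_cancel₀ hd0, Real.rpow_one, mul_comm, div_mul_cancel₀ _ hnpos.ne']
    have hks : (k : ℝ) ≤ s := by
      rw [hsdef]
      calc (k : ℝ) = 2 * δ₀ * c * ((k : ℝ) / (2 * δ₀ * c)) := by field_simp
        _ ≤ 2 * δ₀ * c * L := mul_le_mul_of_nonneg_left h1 hsc.le
    have hst : ∀ x ∈ A, s ≤ (n : ℝ) * (ν (closedBall x r)).toReal := by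
      intro x hx
      have h := hlb x hx r hr hr1
      calc s = (n : ℝ) * (2 * δ₀ * r ^ d) := by
            have h2 : s = 2 * δ₀ * (c * L) := by rw [hsdef]; ring
            rw [h2, ← hrd]; ring
        _ ≤ (n : ℝ) * (ν (closedBall x r)).toReal :=
          mul_le_mul_of_nonneg_left h hnpos.le
    set C := (k : ℝ) * (s ^ (k - 1) * Real.exp (-s)) with hC
    have hint : ‖∫ x in A, ∑ j ∈ Finset.range k,
        ((n : ℝ) * (ν (closedBall x r)).toReal) ^ j / (Nat.factorial j)
          * Real.exp (-((n : ℝ) * (ν (closedBall x r)).toReal)) ∂ν‖ ≤ C * (ν A).toReal := by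
      apply norm_setIntegral_le_of_norm_le_const_ae' (by simp [hAν])
      apply Filter.Eventually.of_forall
      intro x hx
      have ht : s ≤ (n : ℝ) * (ν (closedBall x r)).toReal := hst x hx
      rw [Real.norm_of_nonneg (Finset.sum_nonneg fun j _ => by positivity)]
      exact aux_sum hk hks ht
    rw [hAν] at hint
    simp only [ENNReal.toReal_one, mul_one] at hint
    have hgoal : (n : ℝ) * C = g n := by
      have hne : (n : ℝ) = Real.exp L := (Real.exp_log hnpos).symm
      have hexp : Real.exp L * Real.exp (-s) = Real.exp (-(2 * δ₀ * c - 1) * L) := by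
        rw [← Real.exp_add]; congr 1; rw [hsdef]; ring
      simp only [hg, ← hLdef, Real.rpow_natCast]
      rw [hC, hne, ← hexp, hsdef, mul_pow]
      ring
    rw [norm_mul, Real.norm_of_nonneg (Nat.cast_nonneg n), ← hgoal]
    exact mul_le_mul_of_nonneg_left hint hnpos.le
  · -- g → 0
    have h1 : Tendsto (fun L : ℝ => L ^ ((k - 1 : ℕ) : ℝ) * Real.exp (-(2 * δ₀ * c - 1) * L))
        atTop (nhds 0) :=
      tendsto_rpow_mul_exp_neg_mul_atTop_nhds_zero _ _ hεpos
    have := ((h1.comp hL).const_mul ((k : ℝ) * (2 * δ₀ * c) ^ (k - 1)))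
    simpa [hg, Function.comp, mul_comm] using this
end

section
/- Suppose G(X,r) is a geometric graph on a finite set X ⊂ ℝ^d with |X| ≥ k+2 and L_k(X) ≤ r < M_k(X). Then there exists a (k−1)-separating pair (Y, Y′) for G(X,r) in which neither Y nor Y′ is a singleton. -/
open scoped Classical

noncomputable section

/-- The geometric graph `G(X,r)`. -/
def geoGraph {d : ℕ} (X : Finset (EuclideanSpace ℝ (Fin d))) (r : ℝ) :
    SimpleGraph {x // x ∈ X} where
  Adj a b := a ≠ b ∧ dist (a : EuclideanSpace ℝ (Fin d)) (b : EuclideanSpace ℝ (Fin d)) ≤ r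
  symm := ⟨fun a b h => ⟨h.1.symm, by rw [dist_comm]; exact h.2⟩⟩
  loopless := ⟨fun a h => h.1 rfl⟩

/-- `G(X,r)` is `k`-connected. -/
def kConnected {d : ℕ} (k : ℕ) (X : Finset (EuclideanSpace ℝ (Fin d))) (r : ℝ) : Prop :=
  ∀ S : Finset (EuclideanSpace ℝ (Fin d)), S ⊆ X → S.card ≤ k - 1 →
    (geoGraph (X \ S) r).Connected

/-- The `k`-connectivity threshold `M_k(X)`. -/
def connThreshold {d : ℕ} (k : ℕ) (X : Finset (EuclideanSpace ℝ (Fin d))) : ℝ :=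
  sInf {r : ℝ | 0 < r ∧ kConnected k X r}

/-- The largest `k`-nearest-neighbour link `L_k(X)`. -/
def nnLink {d : ℕ} (k : ℕ) (X : Finset (EuclideanSpace ℝ (Fin d))) : ℝ :=
  if h : k + 1 ≤ X.card then
    X.sup' (Finset.card_pos.mp (lt_of_lt_of_le (Nat.succ_pos k) h))
      (fun x => sInf {r : ℝ | 0 < r ∧ k < (X.filter (fun y => dist y x ≤ r)).card})
  else 0

/-- `(Y, Y')` is a `j`-separating pair for `G(X,r)`: disjoint nonempty subsets of `X`,
each inducing a connected geometric graph, whose union induces a disconnected graph, with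
at most `j` points of `X \ (Y ∪ Y')` within distance `r` of `Y ∪ Y'`. -/
def sepPair {d : ℕ} (X : Finset (EuclideanSpace ℝ (Fin d))) (r : ℝ) (j : ℕ)
    (Y Y' : Finset (EuclideanSpace ℝ (Fin d))) : Prop :=
  Y ⊆ X ∧ Y' ⊆ X ∧ Disjoint Y Y' ∧ Y.Nonempty ∧ Y'.Nonempty ∧
    (geoGraph Y r).Connected ∧ (geoGraph Y' r).Connected ∧
    ¬ (geoGraph (Y ∪ Y') r).Connected ∧
    ((X \ (Y ∪ Y')).filter (fun z => ∃ w ∈ Y ∪ Y', dist z w ≤ r)).card ≤ j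

namespace Aux15

variable {d : ℕ} {A : Finset (EuclideanSpace ℝ (Fin d))} {r : ℝ}

/-- The connected component of `a` in `geoGraph A r`, as a `Finset`. -/
def comp (A : Finset (EuclideanSpace ℝ (Fin d))) (r : ℝ) (a : {x // x ∈ A}) :
    Finset (EuclideanSpace ℝ (Fin d)) :=
  A.filter (fun x => ∃ h : x ∈ A, (geoGraph A r).Reachable a ⟨x, h⟩)

lemma mem_comp {a : {x // x ∈ A}} {x : EuclideanSpace ℝ (Fin d)} :
    x ∈ comp A r a ↔ ∃ h : x ∈ A, (geoGraph A r).Reachable a ⟨x, h⟩ := by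
  constructor
  · intro hx
    exact (Finset.mem_filter.mp hx).2
  · intro hx
    obtain ⟨h, hrc⟩ := hx
    exact Finset.mem_filter.mpr ⟨h, h, hrc⟩

lemma self_mem_comp (a : {x // x ∈ A}) : a.1 ∈ comp A r a :=
  mem_comp.mpr ⟨a.2, SimpleGraph.Reachable.refl _⟩

lemma comp_walk_reach (a : {x // x ∈ A}) {u v : {x // x ∈ A}}
    (p : (geoGraph A r).Walk u v) :
    ∀ (hu : u.1 ∈ comp A r a) (hv : v.1 ∈ comp A r a),
      (geoGraph (comp A r a) r).Reachable ⟨u.1, hu⟩ ⟨v.1, hv⟩ := by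
  induction p with
  | nil => intro hu hv; exact SimpleGraph.Reachable.refl _
  | @cons u w v h q ih =>
    intro hu hv
    obtain ⟨huA, hra⟩ := mem_comp.mp hu
    have hraw : (geoGraph A r).Reachable a w := hra.trans h.reachable
    have hw : w.1 ∈ comp A r a := mem_comp.mpr ⟨w.2, hraw⟩
    have hadj : (geoGraph (comp A r a) r).Adj ⟨u.1, hu⟩ ⟨w.1, hw⟩ := by
      refine ⟨?_, h.2⟩
      intro he
      rw [Subtype.mk_eq_mk] at he
      exact h.1 (Subtype.ext he)
    exact hadj.reachable.trans (ih hw hv)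

lemma comp_connected (a : {x // x ∈ A}) : (geoGraph (comp A r a) r).Connected := by
  rw [SimpleGraph.connected_iff]
  refine ⟨?_, ⟨⟨a.1, self_mem_comp a⟩⟩⟩
  rintro ⟨u, hu⟩ ⟨v, hv⟩
  obtain ⟨huA, hrau⟩ := mem_comp.mp hu
  obtain ⟨hvA, hrav⟩ := mem_comp.mp hv
  obtain ⟨p⟩ := hrau
  obtain ⟨q⟩ := hrav
  have ha : a.1 ∈ comp A r a := self_mem_comp a
  exact (comp_walk_reach a p ha hu).symm.trans (comp_walk_reach a q ha hv)

lemma deg_lemma {k : ℕ} {X : Finset (EuclideanSpace ℝ (Fin d))}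
    (hcard : k + 2 ≤ X.card) (hL : nnLink k X ≤ r)
    {x : EuclideanSpace ℝ (Fin d)} (hx : x ∈ X) :
    k < (X.filter (fun y => dist y x ≤ r)).card := by
  have hk1 : k + 1 ≤ X.card := by omega
  rw [nnLink, dif_pos hk1] at hL
  have hinf : sInf {ρ : ℝ | 0 < ρ ∧ k < (X.filter (fun y => dist y x ≤ ρ)).card} ≤ r :=
    le_trans (Finset.le_sup'
      (fun x => sInf {ρ : ℝ | 0 < ρ ∧ k < (X.filter (fun y => dist y x ≤ ρ)).card}) hx) hL
  have hXne : X.Nonempty := ⟨x, hx⟩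
  by_cases hs : (X.filter (fun y => r < dist y x)).Nonempty
  · set m := (X.filter (fun y => r < dist y x)).inf' hs (fun y => dist y x) with hm
    have hrm : r < m := by
      rw [hm, Finset.lt_inf'_iff]
      intro y hy
      exact (Finset.mem_filter.mp hy).2
    set R := X.sup' hXne (fun y => dist y x) + 1 with hR
    have hR0 : 0 < R := by
      have : (0 : ℝ) ≤ X.sup' hXne (fun y => dist y x) :=
        le_trans dist_nonneg (Finset.le_sup' (fun y => dist y x) hx)
      rw [hR]; linarith
    have hfR : X.filter (fun y => dist y x ≤ R) = X := by
      apply Finset.filter_true_of_mem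
      intro y hy
      have : dist y x ≤ X.sup' hXne (fun y => dist y x) :=
        Finset.le_sup' (fun y => dist y x) hy
      rw [hR]; linarith
    have hTne : {ρ : ℝ | 0 < ρ ∧ k < (X.filter (fun y => dist y x ≤ ρ)).card}.Nonempty :=
      ⟨R, hR0, by rw [hfR]; omega⟩
    obtain ⟨ρ, hρT, hρm⟩ := exists_lt_of_csInf_lt hTne (lt_of_le_of_lt hinf hrm)
    have hsub : X.filter (fun y => dist y x ≤ ρ) ⊆ X.filter (fun y => dist y x ≤ r) := by
      intro y hy
      obtain ⟨hyX, hyd⟩ := Finset.mem_filter.mp hy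
      refine Finset.mem_filter.mpr ⟨hyX, ?_⟩
      by_contra hgt
      push_neg at hgt
      have hym : y ∈ X.filter (fun y => r < dist y x) := Finset.mem_filter.mpr ⟨hyX, hgt⟩
      have : m ≤ dist y x := Finset.inf'_le (fun y => dist y x) hym
      linarith
    exact lt_of_lt_of_le hρT.2 (Finset.card_le_card hsub)
  · have hf : X.filter (fun y => dist y x ≤ r) = X := by
      apply Finset.filter_true_of_mem
      intro y hy
      by_contra hgt
      push_neg at hgt
      exact hs ⟨y, Finset.mem_filter.mpr ⟨hy, hgt⟩⟩
    rw [hf]; omega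

end Aux15

open Aux15 in
/-- If `|X| ≥ k+2` and `L_k(X) ≤ r < M_k(X)`, then `G(X,r)` has a `(k−1)`-separating pair
in which neither set is a singleton. -/
theorem stmt15 {d : ℕ} (k : ℕ) (hk : 1 ≤ k) (X : Finset (EuclideanSpace ℝ (Fin d)))
    (r : ℝ) (hr : 0 < r) (hcard : k + 2 ≤ X.card)
    (hL : nnLink k X ≤ r) (hM : r < connThreshold k X) :
    ∃ Y Y', sepPair X r (k - 1) Y Y' ∧ 2 ≤ Y.card ∧ 2 ≤ Y'.card := by
  have hdeg : ∀ x ∈ X, k < (X.filter (fun y => dist y x ≤ r)).card :=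
    fun x hx => deg_lemma hcard hL hx
  -- not k-connected
  have hnk : ¬ kConnected k X r := by
    intro h
    have hle : connThreshold k X ≤ r :=
      csInf_le ⟨0, fun y hy => le_of_lt hy.1⟩ ⟨hr, h⟩
    exact absurd hM (not_lt.mpr hle)
  unfold kConnected at hnk
  push_neg at hnk
  obtain ⟨S, hSX, hSc, hSnc⟩ := hnk
  set A := X \ S with hA
  have hAX : A ⊆ X := Finset.sdiff_subset
  have hAcard : 3 ≤ A.card := by
    have h1 : X.card - S.card ≤ A.card := Finset.le_card_sdiff S X
    omega
  have hAne : A.Nonempty := Finset.card_pos.mp (by omega)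
  have hVne : Nonempty {x // x ∈ A} := ⟨⟨hAne.choose, hAne.choose_spec⟩⟩
  rw [SimpleGraph.connected_iff] at hSnc
  push_neg at hSnc
  have hnp : ¬ (geoGraph A r).Preconnected := fun hp => (hSnc hp).false hVne.some
  unfold SimpleGraph.Preconnected at hnp
  push_neg at hnp
  obtain ⟨a, b, hab⟩ := hnp
  set Y := comp A r a with hY
  set Y' := comp A r b with hY'
  have haY : a.1 ∈ Y := self_mem_comp a
  have hbY' : b.1 ∈ Y' := self_mem_comp b
  have hYA : Y ⊆ A := Finset.filter_subset _ _
  have hY'A : Y' ⊆ A := Finset.filter_subset _ _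
  have hdisj : Disjoint Y Y' := by
    rw [Finset.disjoint_left]
    intro x hxY hxY'
    obtain ⟨h1, r1⟩ := mem_comp.mp hxY
    obtain ⟨h2, r2⟩ := mem_comp.mp hxY'
    exact hab (r1.trans r2.symm)
  have hcross : ∀ y ∈ Y, ∀ y' ∈ Y', r < dist y y' := by
    intro y hy y' hy'
    by_contra hle
    push_neg at hle
    obtain ⟨h1, r1⟩ := mem_comp.mp hy
    obtain ⟨h2, r2⟩ := mem_comp.mp hy'
    have hne : (⟨y, h1⟩ : {x // x ∈ A}) ≠ ⟨y', h2⟩ := by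
      intro he
      rw [Subtype.mk_eq_mk] at he
      exact Finset.disjoint_left.mp hdisj hy (he ▸ hy')
    have hadj : (geoGraph A r).Adj ⟨y, h1⟩ ⟨y', h2⟩ := ⟨hne, hle⟩
    exact hab ((r1.trans hadj.reachable).trans r2.symm)
  -- union disconnected
  have hUdis : ¬ (geoGraph (Y ∪ Y') r).Connected := by
    intro hc
    have key : ∀ {u v : {x // x ∈ Y ∪ Y'}} (p : (geoGraph (Y ∪ Y') r).Walk u v),
        u.1 ∈ Y → v.1 ∈ Y := by
      intro u v p
      induction p with
      | nil => exact id
      | @cons u w v h q ih =>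
        intro hu
        have hw : w.1 ∈ Y := by
          rcases Finset.mem_union.mp w.2 with h' | h'
          · exact h'
          · exact absurd h.2 (not_le.mpr (hcross u.1 hu w.1 h'))
        exact ih hw
    obtain ⟨p⟩ := hc.preconnected ⟨a.1, Finset.mem_union_left _ haY⟩
        ⟨b.1, Finset.mem_union_right _ hbY'⟩
    exact Finset.disjoint_left.mp hdisj (key p haY) hbY'
  -- the buffer set sits inside S
  have hFsub : ((X \ (Y ∪ Y')).filter (fun z => ∃ w ∈ Y ∪ Y', dist z w ≤ r)) ⊆ S := by
    intro z hz
    obtain ⟨hz1, hw⟩ := Finset.mem_filter.mp hz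
    obtain ⟨hzX, hznu⟩ := Finset.mem_sdiff.mp hz1
    by_contra hzS
    have hzA : z ∈ A := Finset.mem_sdiff.mpr ⟨hzX, hzS⟩
    obtain ⟨w, hwu, hdw⟩ := hw
    have hwA : w ∈ A := by
      rcases Finset.mem_union.mp hwu with h' | h'
      · exact hYA h'
      · exact hY'A h'
    have hne : (⟨z, hzA⟩ : {x // x ∈ A}) ≠ ⟨w, hwA⟩ := by
      intro he
      rw [Subtype.mk_eq_mk] at he
      rw [he] at hznu
      exact hznu hwu
    have hadj : (geoGraph A r).Adj ⟨z, hzA⟩ ⟨w, hwA⟩ := ⟨hne, hdw⟩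
    rcases Finset.mem_union.mp hwu with h' | h'
    · obtain ⟨hwA', rw'⟩ := mem_comp.mp h'
      have : z ∈ Y := mem_comp.mpr ⟨hzA, rw'.trans hadj.symm.reachable⟩
      exact hznu (Finset.mem_union_left _ this)
    · obtain ⟨hwA', rw'⟩ := mem_comp.mp h'
      have : z ∈ Y' := mem_comp.mpr ⟨hzA, rw'.trans hadj.symm.reachable⟩
      exact hznu (Finset.mem_union_right _ this)
  have hFcard : ((X \ (Y ∪ Y')).filter (fun z => ∃ w ∈ Y ∪ Y', dist z w ≤ r)).card ≤ k - 1 :=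
    le_trans (Finset.card_le_card hFsub) hSc
  -- neither part is a singleton
  have hY2 : 2 ≤ Y.card := by
    by_contra hlt
    push_neg at hlt
    have h1 : Y.card = 1 := by
      have := Finset.card_pos.mpr ⟨a.1, haY⟩
      omega
    obtain ⟨y0, hy0⟩ := Finset.card_eq_one.mp h1
    have hya : a.1 = y0 := by rw [hy0] at haY; exact Finset.mem_singleton.mp haY
    rw [← hya] at hy0
    have haX : a.1 ∈ X := hAX a.2
    have hN : k ≤ ((X.filter (fun y => dist y a.1 ≤ r)).erase a.1).card := by
      have hmem : a.1 ∈ X.filter (fun y => dist y a.1 ≤ r) :=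
        Finset.mem_filter.mpr ⟨haX, by simp [dist_self, hr.le]⟩
      rw [Finset.card_erase_of_mem hmem]
      have := hdeg a.1 haX
      omega
    have hNF : (X.filter (fun y => dist y a.1 ≤ r)).erase a.1 ⊆
        (X \ (Y ∪ Y')).filter (fun z => ∃ w ∈ Y ∪ Y', dist z w ≤ r) := by
      intro z hz
      obtain ⟨hzne, hzf⟩ := Finset.mem_erase.mp hz
      obtain ⟨hzX, hzd⟩ := Finset.mem_filter.mp hzf
      have hznY : z ∉ Y := by rw [hy0]; simp [hzne]
      have hznY' : z ∉ Y' := by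
        intro hzY'
        have hgt := hcross a.1 haY z hzY'
        rw [dist_comm] at hgt
        linarith
      refine Finset.mem_filter.mpr ⟨Finset.mem_sdiff.mpr ⟨hzX, ?_⟩,
        ⟨a.1, Finset.mem_union_left _ haY, hzd⟩⟩
      intro hzu
      rcases Finset.mem_union.mp hzu with h' | h'
      · exact hznY h'
      · exact hznY' h'
    have hle := Finset.card_le_card hNF
    omega
  have hY'2 : 2 ≤ Y'.card := by
    by_contra hlt
    push_neg at hlt
    have h1 : Y'.card = 1 := by
      have := Finset.card_pos.mpr ⟨b.1, hbY'⟩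
      omega
    obtain ⟨y0, hy0⟩ := Finset.card_eq_one.mp h1
    have hyb : b.1 = y0 := by rw [hy0] at hbY'; exact Finset.mem_singleton.mp hbY'
    rw [← hyb] at hy0
    have hbX : b.1 ∈ X := hAX b.2
    have hN : k ≤ ((X.filter (fun y => dist y b.1 ≤ r)).erase b.1).card := by
      have hmem : b.1 ∈ X.filter (fun y => dist y b.1 ≤ r) :=
        Finset.mem_filter.mpr ⟨hbX, by simp [dist_self, hr.le]⟩
      rw [Finset.card_erase_of_mem hmem]
      have := hdeg b.1 hbX
      omega
    have hNF : (X.filter (fun y => dist y b.1 ≤ r)).erase b.1 ⊆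
        (X \ (Y ∪ Y')).filter (fun z => ∃ w ∈ Y ∪ Y', dist z w ≤ r) := by
      intro z hz
      obtain ⟨hzne, hzf⟩ := Finset.mem_erase.mp hz
      obtain ⟨hzX, hzd⟩ := Finset.mem_filter.mp hzf
      have hznY' : z ∉ Y' := by rw [hy0]; simp [hzne]
      have hznY : z ∉ Y := by
        intro hzY
        have hgt := hcross z hzY b.1 hbY'
        linarith
      refine Finset.mem_filter.mpr ⟨Finset.mem_sdiff.mpr ⟨hzX, ?_⟩,
        ⟨b.1, Finset.mem_union_right _ hbY', hzd⟩⟩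
      intro hzu
      rcases Finset.mem_union.mp hzu with h' | h'
      · exact hznY h'
      · exact hznY' h'
    have hle := Finset.card_le_card hNF
    omega
  exact ⟨Y, Y', ⟨hYA.trans hAX, hY'A.trans hAX, hdisj, ⟨a.1, haY⟩, ⟨b.1, hbY'⟩,
    comp_connected a, comp_connected b, hUdis, hFcard⟩, hY2, hY'2⟩
end
end
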